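/- For a uniform distribution on the interval [c, d] ⊂ ℝ with c < d, the set α_n = { c + (2j-1)(d-c)/(2n) : 1 ≤ j ≤ n } is an optimal set of n-means, i.e., it minimizes ∫ min_{a∈α} (x-a)² dμ(x) over all sets α ⊂ ℝ of cardinality at most n, and the minimum value (the nth quantization error) is (d-c)²/(12 n²). -/

import Mathlib

open Real MeasureTheory

section Helpers
open Finset


lemma qinf_eq_inf' (s : Finset ℝ) (hs : s.Nonempty) (x : ℝ) :
    (⨅ a : s, (x - (a:ℝ))^2) = s.inf' hs (fun a => (x - a)^2) := by
  have : Nonempty s := hs.to_subtype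
  have hbdd : BddBelow (Set.range fun a : s => (x - (a:ℝ))^2) :=
    ⟨0, by rintro y ⟨a, rfl⟩; positivity⟩
  apply le_antisymm
  · obtain ⟨a, ha, hle⟩ := s.exists_mem_eq_inf' hs (fun a => (x - a)^2)
    rw [hle]
    exact ciInf_le hbdd ⟨a, ha⟩
  · exact le_ciInf fun a => Finset.inf'_le _ a.2

lemma cont_inf' (s : Finset ℝ) (hs : s.Nonempty) :
    Continuous (fun x => s.inf' hs (fun a => (x - a)^2)) := by
  induction hs using Finset.Nonempty.cons_induction with
  | singleton a => simpa using (by fun_prop : Continuous fun x : ℝ => (x - a)^2)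
  | cons a s ha hs ih =>
      have : ∀ x : ℝ, (Finset.cons a s ha).inf' (Finset.cons_nonempty ha) (fun b => (x - b)^2)
          = min ((x - a)^2) (s.inf' hs (fun b => (x - b)^2)) := fun x => Finset.inf'_cons hs _
      simp only [this]
      exact Continuous.min (by fun_prop) ih

lemma sq_intg (u v m : ℝ) : (∫ x in u..v, (x - m)^2) = ((v-m)^3 - (u-m)^3)/3 := by
  rw [intervalIntegral.integral_comp_sub_right (fun y => y^2) m, integral_pow]
  norm_num

lemma sq_intg_ge (u v m : ℝ) (h : u ≤ v) : (v-u)^3/12 ≤ ∫ x in u..v, (x - m)^2 := by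
  rw [sq_intg]
  nlinarith [sq_nonneg ((v-m)+(u-m)), sub_nonneg.mpr h]

lemma inf'_eq_of (s : Finset ℝ) (hs : s.Nonempty) (x a : ℝ) (ha : a ∈ s)
    (h : ∀ b ∈ s, (x - a)^2 ≤ (x - b)^2) :
    s.inf' hs (fun b => (x - b)^2) = (x - a)^2 :=
  le_antisymm (Finset.inf'_le _ ha) (Finset.le_inf' _ _ h)

/-- interval integral of the inf equals that of the nearest point, given agreement on Ioo -/
lemma intg_congr_Ioo {f g : ℝ → ℝ} (u v : ℝ) (huv : u ≤ v)
    (h : ∀ x ∈ Set.Ioo u v, f x = g x) :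
    (∫ x in u..v, f x) = ∫ x in u..v, g x := by
  apply intervalIntegral.integral_congr_ae
  have hne : ∀ᵐ x : ℝ, x ≠ v := by
    have : (volume : Measure ℝ) {v} = 0 := measure_singleton v
    exact (MeasureTheory.measure_eq_zero_iff_ae_notMem.mp this).mono fun x hx => hx
  filter_upwards [hne] with x hx hmem
  rw [Set.uIoc_of_le huv] at hmem
  exact h x ⟨hmem.1, lt_of_le_of_ne hmem.2 hx⟩

lemma lower_bound (c d : ℝ) (hcd : c < d) (α : Finset ℝ) (hα : α.Nonempty) :
    (d-c)^3 / (12 * (α.card:ℝ)^2) ≤ ∫ x in c..d, α.inf' hα (fun b => (x-b)^2) := by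
  set k := α.card with hk
  have hk1 : 1 ≤ k := Finset.card_pos.mpr hα
  set e := α.orderEmbOfFin (k := k) rfl with he
  set a : ℕ → ℝ := fun i => if h : i < k then e ⟨i, h⟩ else e ⟨k-1, by omega⟩ with ha
  have hamem : ∀ i, a i ∈ α := by
    intro i; simp only [ha]; split <;> exact Finset.orderEmbOfFin_mem _ _ _
  have hamono : Monotone a := by
    intro i j hij
    simp only [ha]
    split <;> split
    · exact e.monotone (by simpa using hij)
    · exact e.monotone (by simp; omega)
    · exact e.monotone (by simp; omega)
    · exact le_refl _
  have hsurj : ∀ b ∈ α, ∃ i, i < k ∧ a i = b := by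
    intro b hb
    have : b ∈ Set.range e := by rw [Finset.range_orderEmbOfFin]; exact hb
    obtain ⟨⟨i, hi⟩, hie⟩ := this
    exact ⟨i, hi, by simp [ha, hi, hie]⟩
  set t : ℕ → ℝ := fun i =>
    if i = 0 then c else if i < k then max c (min d ((a (i-1) + a i)/2)) else d with ht
  have ht0 : t 0 = c := by simp [ht]
  have htk : t k = d := by simp [ht]; omega
  have htc : ∀ i, c ≤ t i := by
    intro i; simp only [ht]; split
    · exact le_refl _
    · split; · exact le_max_left _ _
      · exact hcd.le
  have htd : ∀ i, t i ≤ d := by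
    intro i; simp only [ht]; split
    · exact hcd.le
    · split
      · exact max_le hcd.le (min_le_left _ _)
      · exact le_refl _
  have htmono : ∀ i, t i ≤ t (i+1) := by
    intro i
    rcases Nat.eq_zero_or_pos i with rfl | hi
    · rw [ht0]; exact htc 1
    · by_cases hik : i < k
      · by_cases hik1 : i + 1 < k
        · simp only [ht, if_neg (by omega : ¬ i = 0), if_pos hik,
            if_neg (by omega : ¬ i + 1 = 0), if_pos hik1]
          have h1 : a (i-1) ≤ a i := hamono (by omega)
          have h2 : a i ≤ a (i+1) := hamono (by omega)
          have : (a (i-1) + a i)/2 ≤ (a (i+1-1) + a (i+1))/2 := by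
            simp only [Nat.add_sub_cancel]; linarith
          exact max_le_max (le_refl c) (min_le_min (le_refl d) this)
        · have : t (i+1) = d := by simp only [ht, if_neg (by omega : ¬ i+1 = 0), if_neg hik1]
          rw [this]; exact htd i
      · have h1 : t i = d := by simp only [ht, if_neg (by omega : ¬ i = 0), if_neg hik]
        have h2 : t (i+1) = d := by
          simp only [ht, if_neg (by omega : ¬ i+1 = 0), if_neg (by omega : ¬ i+1 < k)]
        rw [h1, h2]
  -- key: on Ioo (t i) (t (i+1)), a i is nearest
  have hkey : ∀ i, i < k → ∀ x ∈ Set.Ioo (t i) (t (i+1)), ∀ b ∈ α,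
      (x - a i)^2 ≤ (x - b)^2 := by
    intro i hik x hx b hb
    obtain ⟨j, hjk, rfl⟩ := hsurj b hb
    rcases lt_trichotomy j i with hji | rfl | hij
    · -- j < i, so i ≥ 1
      have hi1 : i ≠ 0 := by omega
      have hti : t i = max c (min d ((a (i-1) + a i)/2)) := by
        simp only [ht, if_neg hi1, if_pos hik]
      rcases le_or_gt ((a (i-1) + a i)/2) d with hmd | hmd
      · have h1 : (a (i-1) + a i)/2 ≤ t i := by
          rw [hti]; exact le_trans (by rw [min_eq_right hmd]) (le_max_right _ _)
        have h2 : a j ≤ a (i-1) := hamono (by omega)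
        have h3 : a j ≤ a i := hamono (by omega)
        nlinarith [hx.1]
      · exfalso
        have h1 : d ≤ t i := by
          rw [hti]; exact le_trans (by rw [min_eq_left hmd.le]) (le_max_right _ _)
        have := htd (i+1)
        have := hx.1; have := hx.2
        linarith
    · exact le_refl _
    · -- i < j, so i+1 < k
      have hik1 : i + 1 < k := by omega
      have hti1 : t (i+1) = max c (min d ((a i + a (i+1))/2)) := by
        simp only [ht, if_neg (by omega : ¬ i+1 = 0), if_pos hik1, Nat.add_sub_cancel]
      rcases le_or_gt c ((a i + a (i+1))/2) with hcm | hcm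
      · have h1 : t (i+1) ≤ (a i + a (i+1))/2 := by
          rw [hti1]; exact max_le hcm (min_le_right _ _)
        have h2 : a (i+1) ≤ a j := hamono (by omega)
        have h3 : a i ≤ a j := hamono (by omega)
        nlinarith [hx.2]
      · exfalso
        have h1 : t (i+1) ≤ c := by
          rw [hti1, min_eq_right (le_trans hcm.le hcd.le), max_eq_left hcm.le]
        have := htc i
        have := hx.1; have := hx.2
        linarith
  -- integrability
  have hcont := cont_inf' α hα
  have hint : ∀ i, IntervalIntegrable (fun x => α.inf' hα (fun b => (x-b)^2))
      volume (t i) (t (i+1)) := fun i => hcont.intervalIntegrable _ _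
  -- split the integral
  have hsplit : (∫ x in c..d, α.inf' hα (fun b => (x-b)^2))
      = ∑ i ∈ Finset.range k, ∫ x in (t i)..(t (i+1)), α.inf' hα (fun b => (x-b)^2) := by
    rw [← ht0, ← htk]
    exact (intervalIntegral.sum_integral_adjacent_intervals fun i _ => hint i).symm
  rw [hsplit]
  have hcell : ∀ i ∈ Finset.range k,
      (t (i+1) - t i)^3/12 ≤ ∫ x in (t i)..(t (i+1)), α.inf' hα (fun b => (x-b)^2) := by
    intro i hi
    rw [Finset.mem_range] at hi
    have heq : (∫ x in (t i)..(t (i+1)), α.inf' hα (fun b => (x-b)^2))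
        = ∫ x in (t i)..(t (i+1)), (x - a i)^2 := by
      apply intg_congr_Ioo _ _ (htmono i)
      intro x hx
      exact inf'_eq_of α hα x (a i) (hamem i) (hkey i hi x hx)
    rw [heq]
    exact sq_intg_ge _ _ _ (htmono i)
  refine le_trans ?_ (Finset.sum_le_sum hcell)
  -- ∑ (ℓ_i)^3 ≥ (∑ ℓ_i)^3 / k^2, and ∑ ℓ_i = d - c
  have hsum : ∑ i ∈ Finset.range k, (t (i+1) - t i) = d - c := by
    rw [Finset.sum_range_sub t, ht0, htk]
  have hjensen := pow_sum_div_card_le_sum_pow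
    (f := fun i => t (i+1) - t i) (s := Finset.range k)
    (fun i _ => sub_nonneg.mpr (htmono i)) 2
  rw [hsum, Finset.card_range] at hjensen
  have : ∑ i ∈ Finset.range k, (t (i+1) - t i)^3/12
      = (∑ i ∈ Finset.range k, (t (i+1) - t i)^3)/12 := by
    rw [Finset.sum_div]
  rw [this]
  norm_num at hjensen
  have hrw : (d - c)^3 / (12 * (k:ℝ)^2) = ((d-c)^3/(k:ℝ)^2)/12 := by ring
  rw [hrw]
  linarith

lemma midpoint_value (c d : ℝ) (hcd : c < d) (n : ℕ) (hn : 1 ≤ n)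
    (hS : ((Finset.Icc 1 n).image
      (fun j : ℕ => c + (2*(j:ℝ)-1)*(d-c)/(2*n))).Nonempty) :
    (∫ x in c..d, ((Finset.Icc 1 n).image
        (fun j : ℕ => c + (2*(j:ℝ)-1)*(d-c)/(2*n))).inf' hS (fun b => (x-b)^2))
      = (d-c)^3/(12*(n:ℝ)^2) := by
  set S := (Finset.Icc 1 n).image (fun j : ℕ => c + (2*(j:ℝ)-1)*(d-c)/(2*n)) with hSdef
  have hN : (0:ℝ) < n := by exact_mod_cast hn
  set r : ℝ := (d-c)/(2*n) with hr
  have hrpos : 0 < r := div_pos (sub_pos.mpr hcd) (by positivity)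
  have hgS : ∀ j : ℕ, 1 ≤ j → j ≤ n → c + (2*(j:ℝ)-1)*r ∈ S := by
    intro j h1 h2
    rw [hSdef]
    apply Finset.mem_image.mpr
    exact ⟨j, Finset.mem_Icc.mpr ⟨h1, h2⟩, by rw [hr]; ring⟩
  set u : ℕ → ℝ := fun i => c + (2*(i:ℝ))*r with hu
  have hu0 : u 0 = c := by simp [hu]
  have hun : u n = d := by
    simp only [hu, hr]; field_simp; ring
  have humono : ∀ i : ℕ, u i ≤ u (i+1) := by
    intro i; simp only [hu]; push_cast; nlinarith
  have hcont := cont_inf' S hS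
  have hsplit : (∫ x in c..d, S.inf' hS (fun b => (x-b)^2))
      = ∑ i ∈ Finset.range n, ∫ x in (u i)..(u (i+1)), S.inf' hS (fun b => (x-b)^2) := by
    rw [← hu0, ← hun]
    exact (intervalIntegral.sum_integral_adjacent_intervals
      fun i _ => hcont.intervalIntegrable _ _).symm
  rw [hsplit]
  have hcell : ∀ i ∈ Finset.range n,
      (∫ x in (u i)..(u (i+1)), S.inf' hS (fun b => (x-b)^2)) = 2*r^3/3 := by
    intro i hi
    rw [Finset.mem_range] at hi
    have heq : (∫ x in (u i)..(u (i+1)), S.inf' hS (fun b => (x-b)^2))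
        = ∫ x in (u i)..(u (i+1)), (x - (c + (2*((i:ℝ)+1)-1)*r))^2 := by
      apply intg_congr_Ioo _ _ (humono i)
      intro x hx
      apply inf'_eq_of
      · have := hgS (i+1) (by omega) (by omega)
        push_cast at this ⊢
        convert this using 3
      · intro b hb
        rw [hSdef] at hb
        obtain ⟨j, hj, rfl⟩ := Finset.mem_image.mp hb
        rw [Finset.mem_Icc] at hj
        have hgj : c + (2*(j:ℝ)-1)*(d-c)/(2*↑n) = c + (2*(j:ℝ)-1)*r := by rw [hr]; ring
        rw [hgj]
        have hx1 : c + (2*(i:ℝ))*r < x := by simpa [hu] using hx.1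
        have hx2 : x < c + (2*(i:ℝ)+2)*r := by
          have := hx.2; simp only [hu] at this; push_cast at this; linarith
        rcases lt_trichotomy j (i+1) with hji | rfl | hij
        · have hji' : (j:ℝ) ≤ i := by exact_mod_cast Nat.lt_succ_iff.mp hji
          nlinarith [mul_nonneg (sub_nonneg.mpr hji') hrpos.le]
        · push_cast
          apply le_of_eq
          ring_nf
        · have hij' : (i:ℝ) + 2 ≤ j := by exact_mod_cast hij
          nlinarith [mul_nonneg (sub_nonneg.mpr (by linarith : (0:ℝ) ≤ (j:ℝ) - i - 2)) hrpos.le]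
    rw [heq, sq_intg]
    have e1 : u (i+1) - (c + (2*((i:ℝ)+1)-1)*r) = r := by simp only [hu]; push_cast; ring
    have e2 : u i - (c + (2*((i:ℝ)+1)-1)*r) = -r := by simp only [hu]; push_cast; ring
    rw [e1, e2]; ring
  rw [Finset.sum_congr rfl hcell, Finset.sum_const, Finset.card_range, nsmul_eq_mul, hr]
  field_simp
  ring



end Helpers

/-- For the uniform distribution `μ` on `[c,d]`, the set
`{ c + (2j-1)(d-c)/(2n) : 1 ≤ j ≤ n }` is an optimal set of `n`-means: its distortion
error equals `(d-c)²/(12 n²)`, and any set of at most `n` points has distortion error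
at least `(d-c)²/(12 n²)`. -/
theorem optimal_n_means_uniform_interval (c d : ℝ) (hcd : c < d) (n : ℕ) (hn : 1 ≤ n) :
    (∫ x, (⨅ a : ((Finset.Icc 1 n).image
          (fun j : ℕ => c + (2 * (j : ℝ) - 1) * (d - c) / (2 * n)) : Finset ℝ),
        (x - (a : ℝ)) ^ 2)
        ∂((ENNReal.ofReal (d - c))⁻¹ • volume.restrict (Set.Icc c d)))
      = (d - c) ^ 2 / (12 * (n : ℝ) ^ 2) ∧
    ∀ α : Finset ℝ, α.Nonempty → α.card ≤ n →
      (d - c) ^ 2 / (12 * (n : ℝ) ^ 2) ≤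
        ∫ x, (⨅ a : α, (x - (a : ℝ)) ^ 2)
          ∂((ENNReal.ofReal (d - c))⁻¹ • volume.restrict (Set.Icc c d)) := by
  have hL : (0:ℝ) < d - c := sub_pos.mpr hcd
  have hN : (0:ℝ) < n := by exact_mod_cast hn
  have hsm : ((ENNReal.ofReal (d - c))⁻¹).toReal = (d-c)⁻¹ := by
    rw [ENNReal.toReal_inv, ENNReal.toReal_ofReal hL.le]
  have hmeas : ∀ (f : ℝ → ℝ),
      (∫ x, f x ∂((ENNReal.ofReal (d - c))⁻¹ • volume.restrict (Set.Icc c d)))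
        = (d-c)⁻¹ * ∫ x in c..d, f x := by
    intro f
    rw [integral_smul_measure, hsm, smul_eq_mul]
    congr 1
    rw [intervalIntegral.integral_of_le hcd.le, ← MeasureTheory.integral_Icc_eq_integral_Ioc]
  constructor
  · set S := ((Finset.Icc 1 n).image
      (fun j : ℕ => c + (2 * (j : ℝ) - 1) * (d - c) / (2 * n))) with hSdef
    have hS : S.Nonempty :=
      Finset.Nonempty.image (Finset.nonempty_Icc.mpr hn) _
    rw [hmeas]
    have : (fun x : ℝ => (⨅ a : S, (x - (a:ℝ))^2)) = fun x => S.inf' hS (fun b => (x-b)^2) :=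
      funext fun x => qinf_eq_inf' S hS x
    rw [this, midpoint_value c d hcd n hn hS]
    field_simp
  · intro α hα hcard
    rw [hmeas]
    have : (fun x : ℝ => (⨅ a : α, (x - (a:ℝ))^2)) = fun x => α.inf' hα (fun b => (x-b)^2) :=
      funext fun x => qinf_eq_inf' α hα x
    rw [this]
    have h1 := lower_bound c d hcd α hα
    have hk1 : 1 ≤ α.card := Finset.card_pos.mpr hα
    have hk : (1:ℝ) ≤ (α.card:ℝ) := by exact_mod_cast hk1
    have hkn : (α.card:ℝ) ≤ n := by exact_mod_cast hcard
    have h2 : (d-c)^3 / (12 * (n:ℝ)^2) ≤ (d-c)^3 / (12 * (α.card:ℝ)^2) := by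
      apply div_le_div_of_nonneg_left (by positivity) (by positivity)
      nlinarith
    have h3 : (d-c)^3 / (12 * (n:ℝ)^2) ≤ ∫ x in c..d, α.inf' hα (fun b => (x-b)^2) :=
      le_trans h2 h1
    have := mul_le_mul_of_nonneg_left h3 (by positivity : (0:ℝ) ≤ (d-c)⁻¹)
    calc (d-c)^2/(12*(n:ℝ)^2) = (d-c)⁻¹ * ((d-c)^3/(12*(n:ℝ)^2)) := by field_simp
      _ ≤ _ := this
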